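/- Let G be a finite group, H ≤ K ≤ G subgroups, and work in the Burnside algebra over a field of characteristic zero. Then Ind_K^G(e_H^K) = (|N_G(H)|/|N_K(H)|) · e_H^G. -/

import Mathlib

open Pointwise

attribute [local instance] Classical.propDecidable

/-- Let `H ≤ K ≤ G`. In the rational Burnside algebras (identified with their ghost rings
via the injective mark homomorphisms), induction satisfies
`Ind_K^G (e_H^K) = (|N_G(H)| / |N_K(H)|) · e_H^G`. Here the mark of `Ind_K^G(Y)` at a
subgroup `U ≤ G` is `(1/|K|) ∑_{g ∈ G, g⁻¹Ug ≤ K} m_Y(g⁻¹Ug)`, and `e_H^K`, `e_H^G` are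
the primitive idempotents, whose marks are the indicator of the conjugacy class of `H`. -/
theorem ind_idempotent (G : Type*) [Group G] [Fintype G] (K H : Subgroup G) (hHK : H ≤ K)
    (eHK : Subgroup K → ℚ) (eHG : Subgroup G → ℚ)
    (heHK : ∀ V : Subgroup K,
      eHK V = if ∃ κ : K, MulAut.conj κ • V = H.subgroupOf K then 1 else 0)
    (heHG : ∀ U : Subgroup G,
      eHG U = if ∃ g : G, MulAut.conj g • U = H then 1 else 0) :
    ∀ U : Subgroup G,
      (1 / (Nat.card K : ℚ)) * ∑ g : G,
          (if (MulAut.conj g⁻¹ • U : Subgroup G) ≤ K then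
            eHK ((MulAut.conj g⁻¹ • U : Subgroup G).subgroupOf K) else 0) =
        ((Nat.card (Subgroup.normalizer (H : Set G)) : ℚ) / (Nat.card ↥((Subgroup.normalizer (H : Set G)) ⊓ K) : ℚ)) * eHG U := by
  intro U
  -- composition of conjugations
  have hcomp : ∀ (a b : G) (V : Subgroup G),
      MulAut.conj a • MulAut.conj b • V = MulAut.conj (a * b) • V := by
    intro a b V
    rw [map_mul, mul_smul]
  -- conj x • H = H  ↔  x ∈ N_G(H)
  have hnorm : ∀ x : G, MulAut.conj x • H = H ↔ x ∈ (Subgroup.normalizer (H : Set G)) := by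
    intro x
    rw [Subgroup.mem_normalizer_iff'']
    constructor
    · intro h y
      constructor
      · intro hy
        rw [← h, Subgroup.mem_pointwise_smul_iff_inv_smul_mem] at hy
        simpa [MulAut.smul_def, mul_assoc] using hy
      · intro hy
        rw [← h, Subgroup.mem_pointwise_smul_iff_inv_smul_mem]
        simpa [MulAut.smul_def, mul_assoc] using hy
    · intro h
      ext y
      rw [Subgroup.mem_pointwise_smul_iff_inv_smul_mem]
      simpa [MulAut.smul_def, mul_assoc] using (h y).symm
  -- the key condition
  set cond : K → G → Prop := fun k g => MulAut.conj ((k : G) * g⁻¹) • U = H with hcond_def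
  set P : G → Prop := fun g => ∃ k : K, cond k g with hP_def
  -- step 1 : the summand equals the indicator of P
  have hsummand : ∀ g : G,
      (if (MulAut.conj g⁻¹ • U : Subgroup G) ≤ K then
        eHK ((MulAut.conj g⁻¹ • U : Subgroup G).subgroupOf K) else 0)
      = if P g then 1 else 0 := by
    intro g
    by_cases hP : P g
    · obtain ⟨k, hk⟩ := hP
      have hk' : MulAut.conj (k : G) • (MulAut.conj g⁻¹ • U) = H := by
        rw [hcomp]; exact hk
      have hle : (MulAut.conj g⁻¹ • U : Subgroup G) ≤ K := by
        have h2 : (MulAut.conj g⁻¹ • U : Subgroup G) = MulAut.conj ((k⁻¹ : K) : G) • H := by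
          rw [← hk', hcomp]
          simp
        rw [h2]
        exact Subgroup.conj_smul_le_of_le hHK k⁻¹
      rw [if_pos hle, if_pos ⟨k, hk⟩, heHK, if_pos]
      exact ⟨k, by rw [Subgroup.conj_smul_subgroupOf hle k, hk']⟩
    · rw [if_neg hP]
      by_cases hle : (MulAut.conj g⁻¹ • U : Subgroup G) ≤ K
      · rw [if_pos hle, heHK, if_neg]
        rintro ⟨κ, hκ⟩
        apply hP
        refine ⟨κ, ?_⟩
        rw [Subgroup.conj_smul_subgroupOf hle κ] at hκ
        have h1 := congrArg (Subgroup.map K.subtype) hκ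
        rw [Subgroup.subgroupOf_map_subtype, Subgroup.subgroupOf_map_subtype,
          inf_eq_left.mpr (Subgroup.conj_smul_le_of_le hle κ), inf_eq_left.mpr hHK] at h1
        show MulAut.conj ((κ : G) * g⁻¹) • U = H
        rw [← hcomp]
        exact h1
      · rw [if_neg hle]
  simp only [hsummand]
  by_cases h0 : ∃ x : G, MulAut.conj x • U = H
  · obtain ⟨g₀, hg₀⟩ := h0
    have hU : MulAut.conj g₀⁻¹ • H = U := by
      rw [← hg₀, hcomp]; simp
    have hcondN : ∀ x : G, MulAut.conj x • U = H ↔ x * g₀⁻¹ ∈ (Subgroup.normalizer (H : Set G)) := by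
      intro x
      rw [← hnorm (x * g₀⁻¹), ← hcomp, hU]
    have hcond_iff : ∀ (k : K) (g : G),
        cond k g ↔ (k : G) * g⁻¹ * g₀⁻¹ ∈ (Subgroup.normalizer (H : Set G)) := fun k g => hcondN _
    -- Lemma C : for fixed k, number of g with cond k g is |N|
    have lemC : ∀ k : K, (Finset.univ.filter (fun g : G => cond k g)).card
        = Nat.card (Subgroup.normalizer (H : Set G)) := by
      intro k
      rw [Nat.card_eq_fintype_card, ← Finset.card_univ]
      refine Finset.card_bij'
        (fun g hg => (⟨(k : G) * g⁻¹ * g₀⁻¹, ?_⟩ : (Subgroup.normalizer (H : Set G))))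
        (fun n _ => g₀⁻¹ * (n : G)⁻¹ * (k : G)) ?_ ?_ ?_ ?_
      · exact (hcond_iff k g).mp (Finset.mem_filter.mp hg).2
      · intro g _
        exact Finset.mem_univ _
      · intro n _
        simp only [Finset.mem_filter, Finset.mem_univ, true_and]
        rw [hcond_iff]
        have h2 : (k : G) * (g₀⁻¹ * (n : G)⁻¹ * (k : G))⁻¹ * g₀⁻¹ = (n : G) := by
          group
        rw [h2]
        exact n.2
      · intro g hg
        group
      · intro n hn
        ext
        simp only
        group
    -- Lemma A : for fixed g with P g, number of k with cond k g is |N ⊓ K|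
    have lemA : ∀ g : G, P g → (Finset.univ.filter (fun k : K => cond k g)).card
        = Nat.card ↥((Subgroup.normalizer (H : Set G)) ⊓ K) := by
      intro g hPg
      obtain ⟨k₀, hk₀⟩ := hPg
      have hk₀' : (k₀ : G) * g⁻¹ * g₀⁻¹ ∈ (Subgroup.normalizer (H : Set G)) := (hcond_iff k₀ g).mp hk₀
      rw [Nat.card_eq_fintype_card, ← Finset.card_univ]
      refine Finset.card_bij'
        (fun k hk => (⟨(k : G) * (k₀ : G)⁻¹, ?_, ?_⟩ : ↥((Subgroup.normalizer (H : Set G)) ⊓ K)))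
        (fun m _ => (⟨(m : G), m.2.2⟩ : K) * k₀) ?_ ?_ ?_ ?_
      · have hkk : (k : G) * g⁻¹ * g₀⁻¹ ∈ (Subgroup.normalizer (H : Set G)) :=
          (hcond_iff k g).mp (Finset.mem_filter.mp hk).2
        have h2 : (k : G) * (k₀ : G)⁻¹
            = ((k : G) * g⁻¹ * g₀⁻¹) * ((k₀ : G) * g⁻¹ * g₀⁻¹)⁻¹ := by group
        rw [h2]
        exact (Subgroup.normalizer (H : Set G)).mul_mem hkk ((Subgroup.normalizer (H : Set G)).inv_mem hk₀')
      · exact K.mul_mem k.2 (K.inv_mem k₀.2)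
      · intro k _
        exact Finset.mem_univ _
      · intro m _
        simp only [Finset.mem_filter, Finset.mem_univ, true_and]
        rw [hcond_iff]
        have h2 : (((⟨(m : G), m.2.2⟩ : K) * k₀ : K) : G) * g⁻¹ * g₀⁻¹
            = (m : G) * ((k₀ : G) * g⁻¹ * g₀⁻¹) := by
          push_cast
          group
        rw [h2]
        exact (Subgroup.normalizer (H : Set G)).mul_mem m.2.1 hk₀'
      · intro k hk
        ext
        simp only [Subgroup.coe_mul]
        group
      · intro m hm
        ext
        simp only [Subgroup.coe_mul]
        group
    -- Lemma B
    have lemB : ∀ g : G, ¬ P g →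
        (Finset.univ.filter (fun k : K => cond k g)).card = 0 := by
      intro g hPg
      rw [Finset.card_eq_zero, Finset.filter_eq_empty_iff]
      intro k _
      exact fun hc => hPg ⟨k, hc⟩
    -- double counting
    have keyN : (Finset.univ.filter P).card * Nat.card ↥((Subgroup.normalizer (H : Set G)) ⊓ K)
        = Nat.card K * Nat.card (Subgroup.normalizer (H : Set G)) := by
      calc (Finset.univ.filter P).card * Nat.card ↥((Subgroup.normalizer (H : Set G)) ⊓ K)
          = ∑ _g ∈ Finset.univ.filter P, Nat.card ↥((Subgroup.normalizer (H : Set G)) ⊓ K) := by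
            rw [Finset.sum_const, smul_eq_mul]
        _ = ∑ g ∈ Finset.univ.filter P,
              (Finset.univ.filter (fun k : K => cond k g)).card := by
            refine Finset.sum_congr rfl fun g hg => ?_
            exact (lemA g (Finset.mem_filter.mp hg).2).symm
        _ = ∑ g : G, (Finset.univ.filter (fun k : K => cond k g)).card := by
            refine Finset.sum_subset (Finset.filter_subset _ _) fun g _ hg => ?_
            exact lemB g (fun h => hg (Finset.mem_filter.mpr ⟨Finset.mem_univ _, h⟩))
        _ = ∑ g : G, ∑ k : K, if cond k g then 1 else 0 := by
            refine Finset.sum_congr rfl fun g _ => ?_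
            rw [Finset.card_filter]
        _ = ∑ k : K, ∑ g : G, if cond k g then 1 else 0 := Finset.sum_comm
        _ = ∑ k : K, (Finset.univ.filter (fun g : G => cond k g)).card := by
            refine Finset.sum_congr rfl fun k _ => ?_
            rw [Finset.card_filter]
        _ = ∑ _k : K, Nat.card (Subgroup.normalizer (H : Set G)) := Finset.sum_congr rfl fun k _ => lemC k
        _ = Nat.card K * Nat.card (Subgroup.normalizer (H : Set G)) := by
            simp [Nat.card_eq_fintype_card, mul_comm]
    -- conclude in ℚ
    rw [heHG, if_pos ⟨g₀, hg₀⟩, mul_one]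
    rw [Finset.sum_boole]
    have hK0 : (Nat.card K : ℚ) ≠ 0 := by
      exact_mod_cast Nat.card_pos.ne'
    have hNK0 : (Nat.card ↥((Subgroup.normalizer (H : Set G)) ⊓ K) : ℚ) ≠ 0 := by
      exact_mod_cast Nat.card_pos.ne'
    rw [one_div, inv_mul_eq_div, div_eq_div_iff hK0 hNK0]
    have hQ := congrArg (fun n : ℕ => (n : ℚ)) keyN
    push_cast at hQ
    linarith
  · have hnone : ∀ g : G, ¬ P g := by
      intro g ⟨k, hk⟩
      exact h0 ⟨(k : G) * g⁻¹, hk⟩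
    simp only [if_neg (hnone _)]
    rw [heHG, if_neg h0]
    simp
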